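/- Let A ∈ ℝ^{m×n}, b ∈ ℝ^m, and U ⊆ V ⊆ {1,…,n}. The system ∃x ≥ 0 : A·x = b ∧ U ⊆ supp(x) ⊆ V has no solution if and only if the following system has a solution: ∃y ∈ ℝ^m : (Aᵀy)(t) ≥ 0 for all t ∈ V, and bᵀy ≤ 0, and bᵀy < Σ_{t∈U} (Aᵀy)(t). -/

import Mathlib

open Matrix

lemma farkas_core {d : Type*} [Fintype d] {ι : Type*} [DecidableEq ι] (s : Finset ι)
    (a : ι → (d → ℝ)) (b : d → ℝ) :
    (∃ x : ι → ℝ, (∀ i, 0 ≤ x i) ∧ b = ∑ i ∈ s, x i • a i) ∨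
    (∃ y : d → ℝ, (∀ i ∈ s, 0 ≤ a i ⬝ᵥ y) ∧ b ⬝ᵥ y < 0) := by
  induction s using Finset.induction_on generalizing a b with
  | empty =>
    by_cases hb : b = 0
    · exact Or.inl ⟨0, fun i => le_refl 0, by simp [hb]⟩
    · refine Or.inr ⟨-b, by simp, ?_⟩
      have h1 : 0 < b ⬝ᵥ b := by
        have h2 : 0 ≤ b ⬝ᵥ b := Finset.sum_nonneg fun i _ => mul_self_nonneg _
        rcases h2.lt_or_eq with h | h
        · exact h
        · exact absurd ((dotProduct_self_eq_zero).mp h.symm) hb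
      rw [dotProduct_neg]
      linarith
  | @insert j s hj ih =>
    rcases ih a b with ⟨x, hx, hb⟩ | ⟨y, hy, hby⟩
    · refine Or.inl ⟨fun i => if i ∈ s then x i else 0,
        fun i => by by_cases h : i ∈ s <;> simp [h, hx i], ?_⟩
      rw [Finset.sum_insert hj]
      simp only [if_neg hj, zero_smul, zero_add]
      rw [hb]
      exact Finset.sum_congr rfl fun i hi => by rw [if_pos hi]
    · by_cases hc : 0 ≤ a j ⬝ᵥ y
      · refine Or.inr ⟨y, ?_, hby⟩
        intro i hi
        rcases Finset.mem_insert.mp hi with rfl | hi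
        · exact hc
        · exact hy i hi
      · push_neg at hc
        have hcne : a j ⬝ᵥ y ≠ 0 := ne_of_lt hc
        set c := a j ⬝ᵥ y with hcdef
        set a' : ι → d → ℝ := fun i => a i - ((a i ⬝ᵥ y) / c) • a j with ha'
        set b' : d → ℝ := b - ((b ⬝ᵥ y) / c) • a j with hb'
        rcases ih a' b' with ⟨x, hx, hxb⟩ | ⟨w, hw, hbw⟩
        · -- left case
          set μ := (b ⬝ᵥ y - ∑ i ∈ s, x i * (a i ⬝ᵥ y)) / c with hμ
          have hsum : 0 ≤ ∑ i ∈ s, x i * (a i ⬝ᵥ y) :=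
            Finset.sum_nonneg fun i hi => mul_nonneg (hx i) (hy i hi)
          have hμpos : 0 < μ := div_pos_of_neg_of_neg (by linarith) hc
          refine Or.inl ⟨fun i => if i = j then μ else x i, ?_, ?_⟩
          · intro i
            by_cases h : i = j <;> simp [h, le_of_lt hμpos, hx i]
          · rw [Finset.sum_insert hj]
            simp only [if_pos rfl, eq_self_iff_true, ↓reduceIte]
            have hrest : ∑ i ∈ s, (if i = j then μ else x i) • a i = ∑ i ∈ s, x i • a i :=
              Finset.sum_congr rfl fun i hi => by
                rw [if_neg (by rintro rfl; exact hj hi)]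
            rw [hrest]
            funext k
            have h1 := congrFun hxb k
            simp only [hb', ha', Pi.sub_apply, Pi.smul_apply, smul_eq_mul, Finset.sum_apply] at h1 ⊢
            rw [Finset.sum_congr rfl (fun i _ => by ring :
              ∀ i ∈ s, x i * (a i k - a i ⬝ᵥ y / c * a j k)
                = x i * a i k - (x i * (a i ⬝ᵥ y)) * (a j k / c))] at h1
            rw [Finset.sum_sub_distrib, ← Finset.sum_mul] at h1
            have : b k = ∑ i ∈ s, x i * a i k
                + (b ⬝ᵥ y / c - (∑ i ∈ s, x i * (a i ⬝ᵥ y)) * (1 / c)) * a j k := by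
              field_simp at h1 ⊢
              linarith [h1]
            rw [this, hμ]
            simp only [Pi.add_apply, Pi.smul_apply, smul_eq_mul, Finset.sum_apply]
            ring_nf
        · -- right case
          refine Or.inr ⟨w - ((a j ⬝ᵥ w) / c) • y, ?_, ?_⟩
          · intro i hi
            rcases Finset.mem_insert.mp hi with rfl | hi
            · rw [dotProduct_sub, dotProduct_smul, smul_eq_mul, ← hcdef,
                div_mul_cancel₀ _ hcne, sub_self]
            · have h2 := hw i hi
              rw [ha', sub_dotProduct, smul_dotProduct, smul_eq_mul] at h2
              rw [dotProduct_sub, dotProduct_smul, smul_eq_mul]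
              calc (0:ℝ) ≤ a i ⬝ᵥ w - a i ⬝ᵥ y / c * (a j ⬝ᵥ w) := h2
              _ = a i ⬝ᵥ w - a j ⬝ᵥ w / c * (a i ⬝ᵥ y) := by ring
          · have h2 := hbw
            rw [hb', sub_dotProduct, smul_dotProduct, smul_eq_mul] at h2
            rw [dotProduct_sub, dotProduct_smul, smul_eq_mul]
            calc b ⬝ᵥ w - a j ⬝ᵥ w / c * (b ⬝ᵥ y)
                = b ⬝ᵥ w - b ⬝ᵥ y / c * (a j ⬝ᵥ w) := by ring
            _ < 0 := h2

lemma farkas_matrix {d κ : Type*} [Fintype d] [Fintype κ] [DecidableEq κ]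
    (M : Matrix d κ ℝ) (b : d → ℝ) :
    (∃ x : κ → ℝ, (∀ k, 0 ≤ x k) ∧ M.mulVec x = b) ∨
    (∃ y : d → ℝ, (∀ k, 0 ≤ Mᵀ.mulVec y k) ∧ b ⬝ᵥ y < 0) := by
  rcases farkas_core Finset.univ (fun k => fun i => M i k) b with ⟨x, hx, hb⟩ | ⟨y, hy, hby⟩
  · refine Or.inl ⟨x, hx, ?_⟩
    funext i
    rw [hb]
    simp [Matrix.mulVec, dotProduct, Finset.sum_apply, mul_comm]
  · refine Or.inr ⟨y, fun k => ?_, hby⟩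
    simpa [Matrix.mulVec, dotProduct, Matrix.transpose_apply] using hy k (Finset.mem_univ k)

lemma gale {d κ : Type*} [Fintype d] [DecidableEq d] [Fintype κ] [DecidableEq κ]
    (M : Matrix d κ ℝ) (c : d → ℝ) :
    (∃ y : κ → ℝ, ∀ i, c i ≤ M.mulVec y i) ∨
    (∃ q : d → ℝ, (∀ i, 0 ≤ q i) ∧ Mᵀ.mulVec q = 0 ∧ 0 < c ⬝ᵥ q) := by
  set N : Matrix d ((κ ⊕ κ) ⊕ d) ℝ := fun i v =>
    Sum.elim (Sum.elim (fun k => M i k) (fun k => -M i k))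
      (fun i' => if i' = i then (-1 : ℝ) else 0) v with hN
  rcases farkas_matrix N c with ⟨x, hx, hNx⟩ | ⟨y, hy, hyc⟩
  · refine Or.inl ⟨fun k => x (.inl (.inl k)) - x (.inl (.inr k)), fun i => ?_⟩
    have h1 := congrFun hNx i
    have h2 : N.mulVec x i =
        (∑ k, M i k * (x (.inl (.inl k)) - x (.inl (.inr k)))) - x (.inr i) := by
      simp [hN, Matrix.mulVec, dotProduct, Fintype.sum_sum_type, mul_sub, Finset.sum_sub_distrib,
        ite_mul, Finset.sum_ite_eq']
      ring
    have h3 : M.mulVec (fun k => x (.inl (.inl k)) - x (.inl (.inr k))) i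
        = c i + x (.inr i) := by
      rw [Matrix.mulVec]
      rw [show (M i ⬝ᵥ fun k => x (.inl (.inl k)) - x (.inl (.inr k)))
        = ∑ k, M i k * (x (.inl (.inl k)) - x (.inl (.inr k))) from rfl]
      rw [← h1, h2]; ring
    rw [h3]
    linarith [hx (.inr i)]
  · refine Or.inr ⟨-y, fun i => ?_, ?_, ?_⟩
    · have := hy (.inr i)
      simp [hN, Matrix.mulVec, dotProduct, Matrix.transpose, Matrix.of_apply, ite_mul,
        Finset.sum_ite_eq] at this
      simpa using this
    · funext k
      have h1 := hy (.inl (.inl k))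
      have h2 := hy (.inl (.inr k))
      simp [hN, Matrix.mulVec, dotProduct, Matrix.transpose, Matrix.of_apply] at h1 h2 ⊢
      have h3 : ∑ i, M i k * y i = 0 := le_antisymm h2 h1
      simpa [mul_neg, Finset.sum_neg_distrib, neg_eq_zero] using h3
    · simpa [dotProduct_neg] using hyc

lemma swap_dot {m n : ℕ} (A : Matrix (Fin m) (Fin n) ℝ) (x : Fin n → ℝ) (y : Fin m → ℝ) :
    A.mulVec x ⬝ᵥ y = ∑ t, x t * Aᵀ.mulVec y t := by
  simp only [Matrix.mulVec, dotProduct, Matrix.transpose_apply, Finset.sum_mul, Finset.mul_sum]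
  rw [Finset.sum_comm]
  exact Finset.sum_congr rfl fun t _ => Finset.sum_congr rfl fun i _ => by ring

/-- Farkas-style lemma with support constraints: `∃ x ≥ 0, A x = b ∧ U ⊆ supp(x) ⊆ V`
has no solution iff `∃ y, Aᵀy ≥_V 0 ∧ bᵀy ≤ 0 ∧ bᵀy < ∑_{t ∈ U} (Aᵀy)(t)` has one. -/
theorem farkas_supp
    {m n : ℕ} (A : Matrix (Fin m) (Fin n) ℝ) (b : Fin m → ℝ)
    (U V : Finset (Fin n)) (hUV : U ⊆ V) :
    (¬ ∃ x : Fin n → ℝ, 0 ≤ x ∧ A.mulVec x = b ∧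
        (↑U : Set (Fin n)) ⊆ {i | 0 < x i} ∧ {i | 0 < x i} ⊆ ↑V) ↔
      ∃ y : Fin m → ℝ, (∀ t ∈ V, 0 ≤ A.transpose.mulVec y t) ∧
        b ⬝ᵥ y ≤ 0 ∧ b ⬝ᵥ y < ∑ t ∈ U, A.transpose.mulVec y t := by
  classical
  constructor
  · intro hP
    set AV : Matrix (Fin m) (Fin n) ℝ := (fun i t => if t ∈ V then A i t else 0) with hAV
    by_cases hS : ∃ x : Fin n → ℝ, (∀ i, 0 ≤ x i) ∧ A.mulVec x = b ∧ ∀ t ∉ V, x t = 0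
    · obtain ⟨xb, hxb0, hxbA, hxbV⟩ := hS
      have ht0 : ∃ t₀ ∈ U, ∀ x : Fin n → ℝ, (∀ i, 0 ≤ x i) → A.mulVec x = b →
          (∀ t ∉ V, x t = 0) → x t₀ = 0 := by
        by_contra hcon
        push_neg at hcon
        choose f hf0 hfA hfV hfne using hcon
        set k : ℝ := (U.card : ℝ) with hk
        have hk0 : 0 < k + 1 := by positivity
        set z : Fin n → ℝ := (k + 1)⁻¹ • (xb + ∑ t ∈ U.attach, f t.1 t.2) with hz
        have hzapp : ∀ i, z i = (k + 1)⁻¹ * (xb i + ∑ t ∈ U.attach, f t.1 t.2 i) := by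
          intro i
          simp [hz, Finset.sum_apply]
          ring
        have hz0 : ∀ i, 0 ≤ z i := by
          intro i
          rw [hzapp i]
          exact mul_nonneg (le_of_lt (inv_pos.mpr hk0))
            (add_nonneg (hxb0 i) (Finset.sum_nonneg fun t _ => hf0 t.1 t.2 i))
        apply hP
        refine ⟨z, fun i => hz0 i, ?_, ?_, ?_⟩
        · have h2 : ∀ t ∈ U.attach, A.mulVecLin (f t.1 t.2) = b := fun t _ => by
            rw [Matrix.mulVecLin_apply]; exact hfA t.1 t.2
          have h1 : A.mulVec z = (k + 1)⁻¹ • (b + U.card • b) := by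
            rw [← Matrix.mulVecLin_apply, hz, _root_.map_smul, _root_.map_add, map_sum,
              Matrix.mulVecLin_apply, hxbA, Finset.sum_congr rfl h2, Finset.sum_const,
              Finset.card_attach]
          rw [h1]
          funext i
          simp only [Pi.smul_apply, Pi.add_apply, smul_eq_mul, nsmul_eq_mul, Pi.mul_apply, Pi.natCast_apply, hk]
          field_simp
          ring
        · intro t ht
          rw [Finset.mem_coe] at ht
          have hft : 0 < f t ht t := lt_of_le_of_ne (hf0 t ht t) (Ne.symm (hfne t ht))
          have hle : f t ht t ≤ ∑ u ∈ U.attach, f u.1 u.2 t :=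
            Finset.single_le_sum (fun u _ => hf0 u.1 u.2 t) (Finset.mem_attach _ ⟨t, ht⟩)
          show 0 < z t
          rw [hzapp t]
          have h1 : 0 < xb t + ∑ u ∈ U.attach, f u.1 u.2 t := by
            have := hxb0 t
            linarith
          exact mul_pos (inv_pos.mpr hk0) h1
        · intro i hi
          rw [Set.mem_setOf_eq] at hi
          by_contra hiV
          rw [Finset.mem_coe] at hiV
          have : z i = 0 := by
            rw [hzapp i, hxbV i hiV]
            rw [Finset.sum_eq_zero fun u _ => hfV u.1 u.2 i hiV]
            ring
          rw [this] at hi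
          exact lt_irrefl 0 hi
      obtain ⟨t₀, ht₀U, ht₀⟩ := ht0
      set Mg : Matrix (Fin n ⊕ Unit) (Fin m) ℝ :=
        (fun r k => Sum.elim (fun t => AV k t) (fun _ => -b k) r) with hMg
      set cg : (Fin n ⊕ Unit) → ℝ :=
        Sum.elim (fun t => if t = t₀ then (1 : ℝ) else 0) (fun _ => 0) with hcg
      rcases gale Mg cg with ⟨y, hy⟩ | ⟨q, hq0, hqM, hqc⟩
      · have hMy : ∀ t, Mg.mulVec y (.inl t) = ∑ k, AV k t * y k := fun t => rfl
        have hVy : ∀ t ∈ V, (if t = t₀ then (1:ℝ) else 0) ≤ Aᵀ.mulVec y t := by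
          intro t ht
          have h1 := hy (.inl t)
          rw [hMy t] at h1
          have h2 : ∑ k, AV k t * y k = Aᵀ.mulVec y t := by
            simp [hAV, ht, Matrix.mulVec, dotProduct, Matrix.transpose_apply]
          rw [h2] at h1
          exact h1
        have hby : b ⬝ᵥ y ≤ 0 := by
          have h1 := hy (.inr ())
          have h2 : Mg.mulVec y (.inr ()) = -(b ⬝ᵥ y) := by
            simp [hMg, Matrix.mulVec, dotProduct, neg_mul]
          rw [h2] at h1
          simp [hcg] at h1
          linarith
        refine ⟨y, ?_, hby, ?_⟩
        · intro t ht
          refine le_trans ?_ (hVy t ht)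
          split <;> norm_num
        · have hU1 : (1:ℝ) ≤ ∑ t ∈ U, Aᵀ.mulVec y t := by
            have := Finset.sum_le_sum (fun t ht => hVy t (hUV ht))
            rwa [Finset.sum_ite_eq' U t₀ (fun _ => (1:ℝ)), if_pos ht₀U] at this
          linarith
      · exfalso
        set x : Fin n → ℝ := fun t => if t ∈ V then q (.inl t) else 0 with hxdef
        set μ : ℝ := q (.inr ()) with hμdef
        have hx0' : ∀ t, 0 ≤ x t := by
          intro t
          by_cases ht : t ∈ V <;> simp [hxdef, ht, hq0 (Sum.inl t)]
        have hxV' : ∀ t ∉ V, x t = 0 := fun t ht => by simp [hxdef, ht]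
        have hAx : A.mulVec x = μ • b := by
          funext j
          have h1 := congrFun hqM j
          have h2 : Mgᵀ.mulVec q j = (∑ t, AV j t * q (.inl t)) - b j * μ := by
            simp [hMg, Matrix.mulVec, dotProduct, Matrix.transpose, Matrix.of_apply,
              Fintype.sum_sum_type]
            ring
          have h3 : ∑ t, AV j t * q (.inl t) = ∑ t, A j t * x t := by
            refine Finset.sum_congr rfl fun t _ => ?_
            by_cases ht : t ∈ V
            · simp [hAV, hxdef, ht]
            · simp [hAV, hxdef, ht]
          rw [h2, h3] at h1
          simp only [Pi.zero_apply] at h1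
          have : ∑ t, A j t * x t = μ * b j := by linarith
          simpa [Matrix.mulVec, dotProduct, Pi.smul_apply, smul_eq_mul, mul_comm] using this
        have hx₀pos : 0 < x t₀ := by
          have hcq : cg ⬝ᵥ q = q (.inl t₀) := by
            simp [hcg, dotProduct, Fintype.sum_sum_type, ite_mul, Finset.sum_ite_eq']
          have hxt : x t₀ = q (.inl t₀) := by simp [hxdef, hUV ht₀U]
          rw [hxt, ← hcq]
          exact hqc
        rcases (hq0 (.inr ())).lt_or_eq with hμpos | hμ0
        · have h1 : A.mulVec (μ⁻¹ • x) = b := by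
            rw [Matrix.mulVec_smul, hAx, smul_smul, inv_mul_cancel₀ (ne_of_gt hμpos), one_smul]
          have h2 := ht₀ (μ⁻¹ • x) (fun i => mul_nonneg (le_of_lt (inv_pos.mpr hμpos)) (hx0' i))
            h1 (fun t ht => by simp [hxV' t ht])
          have : (0:ℝ) < μ⁻¹ * x t₀ := mul_pos (inv_pos.mpr hμpos) hx₀pos
          rw [show (μ⁻¹ • x) t₀ = μ⁻¹ * x t₀ from rfl] at h2
          linarith
        · have hA0 : A.mulVec x = 0 := by rw [hAx, show μ = 0 from hμ0.symm, zero_smul]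
          have h1 : A.mulVec (xb + x) = b := by
            rw [Matrix.mulVec_add, hxbA, hA0, add_zero]
          have h2 := ht₀ (xb + x) (fun i => add_nonneg (hxb0 i) (hx0' i)) h1
            (fun t ht => by rw [Pi.add_apply, hxbV t ht, hxV' t ht, add_zero])
          rw [Pi.add_apply] at h2
          have := hxb0 t₀
          linarith
    · rcases farkas_matrix AV b with ⟨x, hx, hb⟩ | ⟨y, hy, hby⟩
      · exfalso
        apply hS
        refine ⟨fun t => if t ∈ V then x t else 0, ?_, ?_, fun t ht => if_neg ht⟩
        · intro i
          by_cases ht : i ∈ V <;> simp [ht, hx i]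
        · rw [← hb]
          funext i
          simp only [Matrix.mulVec, dotProduct]
          refine Finset.sum_congr rfl fun t _ => ?_
          by_cases ht : t ∈ V <;> simp [hAV, ht]
      · refine ⟨y, ?_, le_of_lt hby, ?_⟩
        · intro t ht
          have h1 := hy t
          have h2 : AVᵀ.mulVec y t = Aᵀ.mulVec y t := by
            simp [hAV, ht, Matrix.mulVec, dotProduct, Matrix.transpose, Matrix.of_apply]
          rwa [h2] at h1
        · have h0 : 0 ≤ ∑ t ∈ U, Aᵀ.mulVec y t := by
            refine Finset.sum_nonneg fun t ht => ?_
            have h1 := hy t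
            have h2 : AVᵀ.mulVec y t = Aᵀ.mulVec y t := by
              simp [hAV, hUV ht, Matrix.mulVec, dotProduct, Matrix.transpose, Matrix.of_apply]
            rwa [h2] at h1
          linarith
  · rintro ⟨y, hyV, hy0, hyU⟩ ⟨x, hx0, hxA, hxU, hxV⟩
    set g := Aᵀ.mulVec y with hg
    have key : b ⬝ᵥ y = ∑ t, x t * g t := by rw [← hxA]; exact swap_dot A x y
    have hterm : ∀ t ∈ Finset.univ, 0 ≤ x t * g t := by
      intro t _
      rcases (lt_or_eq_of_le (hx0 t) : 0 < x t ∨ (0:ℝ) = x t) with h | h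
      · exact mul_nonneg (le_of_lt h) (hyV t (hxV h))
      · rw [← h, zero_mul]
    have hsum0 : ∑ t, x t * g t = 0 :=
      le_antisymm (key ▸ hy0) (Finset.sum_nonneg hterm)
    have hzero := (Finset.sum_eq_zero_iff_of_nonneg hterm).mp hsum0
    have hgU : ∀ t ∈ U, g t = 0 := by
      intro t ht
      have hxt : 0 < x t := hxU (Finset.mem_coe.mpr ht)
      have := hzero t (Finset.mem_univ t)
      rcases mul_eq_zero.mp this with h | h
      · exact absurd h (ne_of_gt hxt)
      · exact h
    rw [key, hsum0, Finset.sum_congr rfl hgU, Finset.sum_const_zero] at hyU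
    exact lt_irrefl 0 hyU
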